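/- arXiv:1911.08889 — 4 statements merged into one kernel-verified Lean document; each statement's English description precedes it below -/
import Mathlib

section
/- Every finite weakly claw-free graph is Z-insensitive; that is, if G is weakly claw-free, then for every D ⊆ V(G) there is no vertex v ∉ N[D] with N(v) ⊆ N[D] such that every u ∈ N(v) has at least two neighbors outside N[D]. -/
open Finset

open scoped Classical

noncomputable section

namespace ZGamePaper

variable {V : Type*} {W : Type*}

/-- The closed neighborhood `N[v]` of a vertex as a `Finset`. -/
def closedNF [Fintype V] (G : SimpleGraph V) (v : V) : Finset V :=
  Finset.univ.filter fun x => x = v ∨ G.Adj v x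

/-- The open neighborhood `N(v)` of a vertex as a `Finset`. -/
def openNF [Fintype V] (G : SimpleGraph V) (v : V) : Finset V :=
  Finset.univ.filter fun x => G.Adj v x

lemma openNF_subset_closedNF [Fintype V] (G : SimpleGraph V) (v : V) :
    openNF G v ⊆ closedNF G v := by
  intro x hx
  simp only [openNF, closedNF, mem_filter] at hx ⊢
  exact ⟨hx.1, Or.inr hx.2⟩

lemma measure_dec [Fintype V] {A C : Finset V} {w : V} (hw : w ∈ C) (hwA : w ∉ A) :
    (Finset.univ \ (A ∪ C)).card < (Finset.univ \ A).card := by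
  apply Finset.card_lt_card
  rw [Finset.ssubset_iff_of_subset
    (Finset.sdiff_subset_sdiff (le_refl _) Finset.subset_union_left)]
  refine ⟨w, ?_, ?_⟩
  · simp [hwA]
  · simp [hw]

/-! ### The Z-domination game -/

/-- The set of legal moves in the Z-domination game, given the set `A` of
already dominated vertices: a vertex `v` is legal if `N(v) ⊄ A`. -/
def zLegal [Fintype V] (G : SimpleGraph V) (A : Finset V) : Finset V :=
  Finset.univ.filter fun v => ¬ openNF G v ⊆ A

lemma zLegal_dec [Fintype V] (G : SimpleGraph V) (A : Finset V) {v : V}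
    (hv : v ∈ zLegal G A) :
    (Finset.univ \ (A ∪ closedNF G v)).card < (Finset.univ \ A).card := by
  simp only [zLegal, mem_filter] at hv
  obtain ⟨w, hw1, hw2⟩ := Finset.not_subset.mp hv.2
  exact measure_dec (openNF_subset_closedNF G v hw1) hw2

/-- The optimal number of remaining moves in the Z-domination game played on `G`,
where `A` is the set of already dominated vertices and `turn = true` iff it is
Dominator's (the minimizer's) turn. -/
def zVal [Fintype V] (G : SimpleGraph V) (turn : Bool) (A : Finset V) : ℕ :=
  if h : (zLegal G A).Nonempty then
    if turn then
      1 + ((zLegal G A).attach.inf' h.attach fun v => zVal G false (A ∪ closedNF G v.1))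
    else
      1 + ((zLegal G A).attach.sup' h.attach fun v => zVal G true (A ∪ closedNF G v.1))
  else 0
termination_by (Finset.univ \ A).card
decreasing_by
  · exact zLegal_dec G A v.2
  · exact zLegal_dec G A v.2

/-- The game Z-domination number `γ_Zg(G)` (Dominator starts). -/
def gammaZg [Fintype V] (G : SimpleGraph V) : ℕ := zVal G true ∅

/-- The Staller-start game Z-domination number `γ'_Zg(G)`. -/
def gammaZg' [Fintype V] (G : SimpleGraph V) : ℕ := zVal G false ∅

/-! ### The (ordinary) domination game -/

/-- The set of legal moves in the domination game: `v` is legal if `N[v] ⊄ A`.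
This set is nonempty if and only if `A ≠ V(G)`. -/
def dLegal [Fintype V] (G : SimpleGraph V) (A : Finset V) : Finset V :=
  Finset.univ.filter fun v => ¬ closedNF G v ⊆ A

lemma dLegal_dec [Fintype V] (G : SimpleGraph V) (A : Finset V) {v : V}
    (hv : v ∈ dLegal G A) :
    (Finset.univ \ (A ∪ closedNF G v)).card < (Finset.univ \ A).card := by
  simp only [dLegal, mem_filter] at hv
  obtain ⟨w, hw1, hw2⟩ := Finset.not_subset.mp hv.2
  exact measure_dec hw1 hw2

/-- The optimal number of remaining moves in the domination game on `G`, with `A`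
the set of already dominated vertices; `turn = true` iff it is Dominator's turn.
(There is no legal move iff `A = V(G)`.) -/
def dVal [Fintype V] (G : SimpleGraph V) (turn : Bool) (A : Finset V) : ℕ :=
  if h : (dLegal G A).Nonempty then
    if turn then
      1 + ((dLegal G A).attach.inf' h.attach fun v => dVal G false (A ∪ closedNF G v.1))
    else
      1 + ((dLegal G A).attach.sup' h.attach fun v => dVal G true (A ∪ closedNF G v.1))
  else 0
termination_by (Finset.univ \ A).card
decreasing_by
  · exact dLegal_dec G A v.2
  · exact dLegal_dec G A v.2

/-- The game domination number `γ_g(G)` (Dominator starts). -/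
def gammaGg [Fintype V] (G : SimpleGraph V) : ℕ := dVal G true ∅

/-- The Staller-start game domination number `γ'_g(G)`. -/
def gammaGg' [Fintype V] (G : SimpleGraph V) : ℕ := dVal G false ∅

/-! ### The total domination game -/

/-- The set of legal moves in the total domination game: `v` is legal if `N(v) ⊄ B`.
For a graph without isolated vertices this set is nonempty iff `B ≠ V(G)`. -/
def tLegal [Fintype V] (G : SimpleGraph V) (B : Finset V) : Finset V :=
  Finset.univ.filter fun v => ¬ openNF G v ⊆ B

lemma tLegal_dec [Fintype V] (G : SimpleGraph V) (B : Finset V) {v : V}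
    (hv : v ∈ tLegal G B) :
    (Finset.univ \ (B ∪ openNF G v)).card < (Finset.univ \ B).card := by
  simp only [tLegal, mem_filter] at hv
  obtain ⟨w, hw1, hw2⟩ := Finset.not_subset.mp hv.2
  exact measure_dec hw1 hw2

/-- The optimal number of remaining moves in the total domination game on `G`,
with `B` the set of already totally dominated vertices; `turn = true` iff it is
Dominator's turn. -/
def tVal [Fintype V] (G : SimpleGraph V) (turn : Bool) (B : Finset V) : ℕ :=
  if h : (tLegal G B).Nonempty then
    if turn then
      1 + ((tLegal G B).attach.inf' h.attach fun v => tVal G false (B ∪ openNF G v.1))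
    else
      1 + ((tLegal G B).attach.sup' h.attach fun v => tVal G true (B ∪ openNF G v.1))
  else 0
termination_by (Finset.univ \ B).card
decreasing_by
  · exact tLegal_dec G B v.2
  · exact tLegal_dec G B v.2

/-- The game total domination number `γ_tg(G)` (Dominator starts). -/
def gammaTg [Fintype V] (G : SimpleGraph V) : ℕ := tVal G true ∅

/-! ### The L-domination game -/

/-- The set of legal moves in the L-domination game, given the set `P` of vertices
played so far: `v` is legal if `v ∉ P` and `N[v] ⊄ N(P)`. -/
def lLegal [Fintype V] (G : SimpleGraph V) (P : Finset V) : Finset V :=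
  Finset.univ.filter fun v => v ∉ P ∧ ¬ closedNF G v ⊆ P.biUnion (openNF G)

lemma lLegal_dec [Fintype V] (G : SimpleGraph V) (P : Finset V) {v : V}
    (hv : v ∈ lLegal G P) :
    (Finset.univ \ insert v P).card < (Finset.univ \ P).card := by
  simp only [lLegal, mem_filter] at hv
  apply Finset.card_lt_card
  rw [Finset.ssubset_iff_of_subset
    (Finset.sdiff_subset_sdiff (le_refl _) (Finset.subset_insert _ _))]
  exact ⟨v, by simp [hv.2.1], by simp⟩

/-- The optimal number of remaining moves in the L-domination game on `G`, with `P`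
the set of vertices played so far; `turn = true` iff it is Dominator's turn. -/
def lVal [Fintype V] (G : SimpleGraph V) (turn : Bool) (P : Finset V) : ℕ :=
  if h : (lLegal G P).Nonempty then
    if turn then
      1 + ((lLegal G P).attach.inf' h.attach fun v => lVal G false (insert v.1 P))
    else
      1 + ((lLegal G P).attach.sup' h.attach fun v => lVal G true (insert v.1 P))
  else 0
termination_by (Finset.univ \ P).card
decreasing_by
  · exact lLegal_dec G P v.2
  · exact lLegal_dec G P v.2

/-- The game L-domination number `γ_Lg(G)` (Dominator starts). -/
def gammaLg [Fintype V] (G : SimpleGraph V) : ℕ := lVal G true ∅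

/-! ### Domination number and related notions -/

/-- The domination number `γ(G)`: the minimum size of a set `S` with `N[S] = V(G)`. -/
def gammaNum [Fintype V] (G : SimpleGraph V) : ℕ :=
  sInf {k | ∃ S : Finset V, S.card = k ∧ ∀ v : V, ∃ u ∈ S, v ∈ closedNF G u}

/-- The partially dominated graph `G|A` has a Z-configuration if there is an
undominated vertex `v` all of whose neighbors are dominated, while every neighbor
of `v` has at least two undominated neighbors. -/
def HasZConfig [Fintype V] (G : SimpleGraph V) (A : Finset V) : Prop :=
  ∃ v : V, v ∉ A ∧ openNF G v ⊆ A ∧ ∀ u ∈ openNF G v, 2 ≤ (openNF G u \ A).card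

/-- A graph without isolated vertices is Z-insensitive if for every `D ⊆ V(G)` the
partially dominated graph `G|N[D]` has no Z-configuration. -/
def ZInsensitive [Fintype V] (G : SimpleGraph V) : Prop :=
  (∀ v : V, ∃ u : V, G.Adj v u) ∧
    ∀ D : Finset V, ¬ HasZConfig G (D.biUnion (closedNF G))

/-- A vertex `w` is the center of a claw if it has three pairwise non-adjacent
neighbors. -/
def IsClawCenter (G : SimpleGraph V) (w : V) : Prop :=
  ∃ a b c : V, G.Adj w a ∧ G.Adj w b ∧ G.Adj w c ∧ a ≠ b ∧ a ≠ c ∧ b ≠ c ∧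
    ¬ G.Adj a b ∧ ¬ G.Adj a c ∧ ¬ G.Adj b c

/-- A graph is weakly claw-free if every vertex has a neighbor that is not the
center of a claw. -/
def WeaklyClawFree (G : SimpleGraph V) : Prop :=
  ∀ v : V, ∃ u : V, G.Adj v u ∧ ¬ IsClawCenter G u

/-- The lexicographic product `G ∘ H`. -/
def lexProd (G : SimpleGraph V) (H : SimpleGraph W) : SimpleGraph (V × W) where
  Adj p q := G.Adj p.1 q.1 ∨ (p.1 = q.1 ∧ H.Adj p.2 q.2)
  symm := ⟨by
    rintro p q (h | ⟨h1, h2⟩)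
    · exact Or.inl h.symm
    · exact Or.inr ⟨h1.symm, h2.symm⟩⟩
  loopless := ⟨by
    rintro p (h | ⟨_, h⟩)
    · exact G.loopless.irrefl _ h
    · exact H.loopless.irrefl _ h⟩


/-- Every finite weakly claw-free graph is Z-insensitive. -/
theorem weaklyClawFree_zInsensitive {V : Type*} [Fintype V] (G : SimpleGraph V)
    (h : WeaklyClawFree G) :
    ZInsensitive G := by
  constructor
  · intro v; obtain ⟨u, hu, _⟩ := h v; exact ⟨u, hu⟩
  · rintro D ⟨v, hvA, hNv, hdeg⟩
    set A := D.biUnion (closedNF G) with hA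
    obtain ⟨u, huv, hclaw⟩ := h v
    have hu : u ∈ openNF G v := by simp [openNF, huv]
    have hmemA : ∀ {a : V}, a ∈ A ↔ ∃ d ∈ D, a = d ∨ G.Adj d a := by
      intro a; simp [hA, closedNF]
    have hdA : ∀ {w : V}, w ∈ D → ∀ {z : V}, (z = w ∨ G.Adj w z) → z ∈ A := by
      intro w hw z hz; exact hmemA.mpr ⟨w, hw, hz⟩
    obtain ⟨d, hdD, hdu⟩ := hmemA.mp (hNv hu)
    have hadj_du : G.Adj d u := by
      rcases hdu with h1 | h1
      · exact absurd (hdA hdD (Or.inr (h1 ▸ huv.symm))) hvA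
      · exact h1
    have h2 := hdeg u hu
    obtain ⟨a, ha, b, hb, hab⟩ := Finset.one_lt_card_iff_nontrivial.mp h2
    have hpick : ∃ x, x ∈ openNF G u \ A ∧ x ≠ v := by
      by_cases hav : a = v
      · exact ⟨b, hb, fun hh => hab (by rw [hav, hh])⟩
      · exact ⟨a, ha, hav⟩
    obtain ⟨x, hx, hxv⟩ := hpick
    rw [Finset.mem_sdiff] at hx
    have hux : G.Adj u x := by
      have := hx.1; simp only [openNF, mem_filter] at this; exact this.2
    have hxA : x ∉ A := hx.2
    exact hclaw ⟨d, v, x, hadj_du.symm, huv.symm, hux,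
      fun hh => hvA (hdA hdD (Or.inl hh.symm)),
      fun hh => hxA (hdA hdD (Or.inl hh.symm)),
      fun hh => hxv hh.symm,
      fun hh => hvA (hdA hdD (Or.inr hh)),
      fun hh => hxA (hdA hdD (Or.inr hh)),
      fun hh => hxA (hNv (by simp [openNF, hh]))⟩

end ZGamePaper
end
end

section
/- If G is a finite graph with minimum degree at least 1 and n ≥ 2, then the game total domination number of G equals the game Z-domination number of the lexicographic product of G with the edgeless graph on n vertices: γ_tg(G) = γ_Zg(G ∘ K̄_n). -/
open Finset

open scoped Classical

noncomputable section

namespace ZGamePaper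

variable {V : Type*} {W : Type*}

/-! ### Auxiliary development for Statement 3 -/

section Stmt3

variable [Fintype V] (G : SimpleGraph V) (n : ℕ)

lemma mem_openNF_lex {w v : V} {j i : Fin n} :
    (v, i) ∈ openNF (lexProd G (⊥ : SimpleGraph (Fin n))) (w, j) ↔ G.Adj w v := by
  simp [openNF, lexProd]

lemma mem_closedNF_lex {w v : V} {j i : Fin n} :
    (v, i) ∈ closedNF (lexProd G (⊥ : SimpleGraph (Fin n))) (w, j) ↔
      (v = w ∧ i = j) ∨ G.Adj w v := by
  simp [closedNF, lexProd, Prod.ext_iff]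

/-- The invariant relating Z-game states on `G ∘ K̄_n` to total-domination game
states on `G`. -/
def Inv (A : Finset (V × Fin n)) (B : Finset V) : Prop :=
  (∀ v ∈ B, ∀ i : Fin n, (v, i) ∈ A) ∧
  (∀ (v : V) (i : Fin n), (v, i) ∈ A → v ∉ B →
    openNF G v ⊆ B ∧ ∀ j : Fin n, (v, j) ∈ A → j = i)

lemma inv_empty : Inv G n ∅ ∅ := by
  constructor
  · intro v hv; simp at hv
  · intro v i hv; simp at hv

variable {G n}

lemma inv_column (hn : 2 ≤ n) {A : Finset (V × Fin n)} {B : Finset V}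
    (h : Inv G n A B) (v : V) : (∀ i : Fin n, (v, i) ∈ A) ↔ v ∈ B := by
  constructor
  · intro hall
    by_contra hvB
    have h0 := hall ⟨0, by omega⟩
    have h1 := hall ⟨1, by omega⟩
    have := (h.2 v ⟨0, by omega⟩ h0 hvB).2 ⟨1, by omega⟩ h1
    simp [Fin.ext_iff] at this
  · intro hvB i; exact h.1 v hvB i

lemma legal_iff (hn : 2 ≤ n) {A : Finset (V × Fin n)} {B : Finset V}
    (h : Inv G n A B) (w : V) (j : Fin n) :
    (w, j) ∈ zLegal (lexProd G (⊥ : SimpleGraph (Fin n))) A ↔ w ∈ tLegal G B := by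
  simp only [zLegal, tLegal, mem_filter, mem_univ, true_and]
  apply not_congr
  constructor
  · intro hs v hv
    simp only [openNF, mem_filter, mem_univ, true_and] at hv
    rw [← inv_column hn h v]
    intro i
    exact hs ((mem_openNF_lex G n).mpr hv)
  · rintro hs ⟨v, i⟩ hp
    have hadj : G.Adj w v := (mem_openNF_lex G n).mp hp
    have hv : v ∈ B := hs (by simp [openNF, hadj])
    exact h.1 v hv i

lemma inv_step (hn : 2 ≤ n) {A : Finset (V × Fin n)} {B : Finset V}
    (h : Inv G n A B) {w : V} {j : Fin n}
    (hleg : (w, j) ∈ zLegal (lexProd G (⊥ : SimpleGraph (Fin n))) A) :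
    Inv G n (A ∪ closedNF (lexProd G (⊥ : SimpleGraph (Fin n))) (w, j))
      (B ∪ openNF G w) := by
  have hN : ¬ openNF G w ⊆ B := by
    have := (legal_iff hn h w j).mp hleg
    simpa [tLegal] using this
  constructor
  · intro v hv i
    rcases mem_union.mp hv with hB | hNw
    · exact mem_union_left _ (h.1 v hB i)
    · refine mem_union_right _ ((mem_closedNF_lex G n).mpr (Or.inr ?_))
      simpa [openNF] using hNw
  · intro v i hvi hvB'
    have hvB : v ∉ B := fun h' => hvB' (mem_union_left _ h')
    have hvNw : v ∉ openNF G w := fun h' => hvB' (mem_union_right _ h')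
    have hnadj : ¬ G.Adj w v := fun h' => hvNw (by simp [openNF, h'])
    rcases mem_union.mp hvi with hA | hC
    · have hkey := h.2 v i hA hvB
      have hvw : v ≠ w := by
        rintro rfl; exact hN hkey.1
      refine ⟨hkey.1.trans subset_union_left, ?_⟩
      intro k hk
      rcases mem_union.mp hk with hA' | hC'
      · exact hkey.2 k hA'
      · rcases (mem_closedNF_lex G n).mp hC' with ⟨hveq, _⟩ | hadj
        · exact absurd hveq hvw
        · exact absurd hadj hnadj
    · rcases (mem_closedNF_lex G n).mp hC with ⟨hveq, hieq⟩ | hadj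
      · subst hveq
        refine ⟨subset_union_right, ?_⟩
        intro k hk
        rcases mem_union.mp hk with hA' | hC'
        · exact absurd (h.2 v k hA' hvB).1 hN
        · rcases (mem_closedNF_lex G n).mp hC' with ⟨_, hkj⟩ | hadj
          · rw [hkj, hieq]
          · exact absurd hadj (G.loopless.irrefl v)
      · exact absurd hadj hnadj

lemma sup'_congr_ex {α β : Type*} {s : Finset α} {t : Finset β} (hs : s.Nonempty)
    (ht : t.Nonempty) {f : α → ℕ} {g : β → ℕ}
    (h1 : ∀ a ∈ s, ∃ b ∈ t, f a ≤ g b) (h2 : ∀ b ∈ t, ∃ a ∈ s, g b ≤ f a) :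
    s.sup' hs f = t.sup' ht g := by
  apply le_antisymm
  · apply Finset.sup'_le
    intro a ha
    obtain ⟨b, hb, hfb⟩ := h1 a ha
    exact hfb.trans (Finset.le_sup' _ hb)
  · apply Finset.sup'_le
    intro b hb
    obtain ⟨a, ha, hga⟩ := h2 b hb
    exact hga.trans (Finset.le_sup' _ ha)

lemma inf'_congr_ex {α β : Type*} {s : Finset α} {t : Finset β} (hs : s.Nonempty)
    (ht : t.Nonempty) {f : α → ℕ} {g : β → ℕ}
    (h1 : ∀ a ∈ s, ∃ b ∈ t, g b ≤ f a) (h2 : ∀ b ∈ t, ∃ a ∈ s, f a ≤ g b) :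
    s.inf' hs f = t.inf' ht g := by
  apply le_antisymm
  · apply Finset.le_inf'
    intro b hb
    obtain ⟨a, ha, hfa⟩ := h2 b hb
    exact (Finset.inf'_le _ ha).trans hfa
  · apply Finset.le_inf'
    intro a ha
    obtain ⟨b, hb, hgb⟩ := h1 a ha
    exact (Finset.inf'_le _ hb).trans hgb

lemma union_indep {α : Type*} (i1 i2 : DecidableEq α) (A C : Finset α) :
    (letI := i1; A ∪ C) = (letI := i2; A ∪ C) := by
  have : i1 = i2 := by
    funext a b
    exact Subsingleton.elim _ _
  rw [this]

lemma sdiff_indep {α : Type*} (i1 i2 : DecidableEq α) (A C : Finset α) :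
    (letI := i1; A \ C) = (letI := i2; A \ C) := by
  have : i1 = i2 := by
    funext a b
    exact Subsingleton.elim _ _
  rw [this]

lemma zVal_union_indep {α : Type*} [Fintype α] (G : SimpleGraph α) (t : Bool)
    (i1 i2 : DecidableEq α) (A C : Finset α) :
    zVal G t (letI := i1; A ∪ C) = zVal G t (letI := i2; A ∪ C) := by
  have : i1 = i2 := by
    funext a b
    exact Subsingleton.elim _ _
  rw [this]

lemma main_eq (hn : 2 ≤ n) (A : Finset (V × Fin n)) (B : Finset V)
    (h : Inv G n A B) (turn : Bool) :
    zVal (lexProd G (⊥ : SimpleGraph (Fin n))) turn A = tVal G turn B := by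
  rw [zVal, tVal]
  by_cases hz : (zLegal (lexProd G (⊥ : SimpleGraph (Fin n))) A).Nonempty
  · have ht : (tLegal G B).Nonempty := by
      obtain ⟨⟨w, j⟩, hw⟩ := hz
      exact ⟨w, (legal_iff hn h w j).mp hw⟩
    have key : ∀ (w : V) (j : Fin n)
        (hm : (w, j) ∈ zLegal (lexProd G (⊥ : SimpleGraph (Fin n))) A) (t : Bool),
        zVal (lexProd G (⊥ : SimpleGraph (Fin n))) t
            (A ∪ closedNF (lexProd G (⊥ : SimpleGraph (Fin n))) (w, j)) =
          tVal G t (B ∪ openNF G w) :=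
      fun w j hm t => main_eq hn _ _ (inv_step hn h hm) t
    rw [dif_pos hz, dif_pos ht]
    cases turn
    · simp only [Bool.false_eq_true, if_false]
      congr 1
      apply sup'_congr_ex
      · rintro ⟨⟨w, j⟩, hm⟩ -
        have hw : w ∈ tLegal G B := (legal_iff hn h w j).mp hm
        exact ⟨⟨w, hw⟩, Finset.mem_attach _ _, le_of_eq ((zVal_union_indep _ _ _ _ _ _).trans (key w j hm true))⟩
      · rintro ⟨u, hu⟩ -
        have hm : (u, (⟨0, by omega⟩ : Fin n)) ∈
            zLegal (lexProd G (⊥ : SimpleGraph (Fin n))) A :=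
          (legal_iff hn h u _).mpr hu
        exact ⟨⟨_, hm⟩, Finset.mem_attach _ _, ge_of_eq ((zVal_union_indep _ _ _ _ _ _).trans (key u _ hm true))⟩
    · simp only [if_true]
      congr 1
      apply inf'_congr_ex
      · rintro ⟨⟨w, j⟩, hm⟩ -
        have hw : w ∈ tLegal G B := (legal_iff hn h w j).mp hm
        exact ⟨⟨w, hw⟩, Finset.mem_attach _ _, ge_of_eq ((zVal_union_indep _ _ _ _ _ _).trans (key w j hm false))⟩
      · rintro ⟨u, hu⟩ -
        have hm : (u, (⟨0, by omega⟩ : Fin n)) ∈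
            zLegal (lexProd G (⊥ : SimpleGraph (Fin n))) A :=
          (legal_iff hn h u _).mpr hu
        exact ⟨⟨_, hm⟩, Finset.mem_attach _ _, le_of_eq ((zVal_union_indep _ _ _ _ _ _).trans (key u _ hm false))⟩
  · have ht : ¬ (tLegal G B).Nonempty := by
      rintro ⟨w, hw⟩
      exact hz ⟨(w, ⟨0, by omega⟩), (legal_iff hn h w _).mpr hw⟩
    rw [dif_neg hz, dif_neg ht]
termination_by (Finset.univ \ A).card
decreasing_by
  rw [union_indep _ (fun a b => Classical.propDecidable (a = b)),
    sdiff_indep _ (fun a b => Classical.propDecidable (a = b)),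
    sdiff_indep _ (fun a b => Classical.propDecidable (a = b)) Finset.univ A]
  exact zLegal_dec _ _ hm

end Stmt3

/-- If `G` has minimum degree at least `1` and `n ≥ 2`, then
`γ_tg(G) = γ_Zg(G ∘ K̄_n)`. -/
theorem gammaTg_eq_gammaZg_lexProd_bot {V : Type*} [Fintype V] (G : SimpleGraph V)
    (hmin : ∀ v : V, ∃ u : V, G.Adj v u) (n : ℕ) (hn : 2 ≤ n) :
    gammaTg G = gammaZg (lexProd G (⊥ : SimpleGraph (Fin n))) := by
  exact (main_eq hn ∅ ∅ (inv_empty G n) true).symm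

end ZGamePaper
end
end

section
/- Let G be a connected graph with n(G) ≥ 3 vertices and let Ĝ be the graph obtained from G by adding a new vertex w adjacent to every vertex of G, and then, for every vertex u ∈ V(G) ∪ {w}, adding ⌈log₂(n(G)+1)⌉ + 1 new pendant vertices each adjacent only to u. Then γ_Zg(Ĝ) = γ(Ĝ) = (γ_g(Ĝ) + 1)/2 = n(G) + 1. -/
open Finset

open scoped Classical

noncomputable section

namespace ZGamePaper

variable {V : Type*} {W : Type*}

/-- The graph `Ĝ` obtained from `G` by adding a universal vertex `w` and then
attaching `k` pendant vertices to each vertex of `V(G) ∪ {w}`. The vertex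
`Sum.inl (Sum.inl u)` is an original vertex of `G`, `Sum.inl (Sum.inr ())` is `w`,
and `Sum.inr (x, i)` is the `i`-th pendant vertex attached to `x`. -/
def hatG {V : Type*} (G : SimpleGraph V) (k : ℕ) :
    SimpleGraph ((V ⊕ Unit) ⊕ (V ⊕ Unit) × Fin k) :=
  SimpleGraph.fromRel fun x y =>
    match x, y with
    | Sum.inl (Sum.inl u), Sum.inl (Sum.inl v) => G.Adj u v
    | Sum.inl (Sum.inl _), Sum.inl (Sum.inr _) => True
    | Sum.inl x, Sum.inr p => p.1 = x
    | _, _ => False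

set_option linter.unusedSectionVars false
set_option maxHeartbeats 2000000

section HatProof

lemma mem_closedNF' {V : Type*} [Fintype V] (G : SimpleGraph V) (v x : V) :
    x ∈ closedNF G v ↔ x = v ∨ G.Adj v x := by simp [closedNF]

lemma mem_openNF' {V : Type*} [Fintype V] (G : SimpleGraph V) (v x : V) :
    x ∈ openNF G v ↔ G.Adj v x := by simp [openNF]

lemma self_mem_closedNF {V : Type*} [Fintype V] (G : SimpleGraph V) (v : V) :
    v ∈ closedNF G v := by simp [closedNF]

variable {V : Type*} [Fintype V] (G : SimpleGraph V) (k : ℕ)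

lemma hatG_adj_inl_inr (a b : V ⊕ Unit) (i : Fin k) :
    (hatG G k).Adj (Sum.inl a) (Sum.inr (b, i)) ↔ b = a := by
  simp [hatG, SimpleGraph.fromRel_adj]

lemma hatG_not_adj_inr (p q : (V ⊕ Unit) × Fin k) :
    ¬ (hatG G k).Adj (Sum.inr p) (Sum.inr q) := by
  simp [hatG, SimpleGraph.fromRel_adj]

lemma hatG_adj_w_inl (v : V) :
    (hatG G k).Adj (Sum.inl (Sum.inr ())) (Sum.inl (Sum.inl v)) := by
  simp [hatG, SimpleGraph.fromRel_adj]

/-- pendant in a support's closed neighborhood -/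
lemma pend_mem_closedNF_inl (a b : V ⊕ Unit) (i : Fin k) :
    (Sum.inr (a, i) : (V ⊕ Unit) ⊕ (V ⊕ Unit) × Fin k) ∈ closedNF (hatG G k) (Sum.inl b)
      ↔ a = b := by
  rw [mem_closedNF']
  simp [hatG_adj_inl_inr]

lemma pend_mem_closedNF_inr (a b : V ⊕ Unit) (i j : Fin k) :
    (Sum.inr (a, i) : (V ⊕ Unit) ⊕ (V ⊕ Unit) × Fin k) ∈ closedNF (hatG G k) (Sum.inr (b, j))
      ↔ a = b ∧ i = j := by
  rw [mem_closedNF']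
  simp [hatG_not_adj_inr, Prod.ext_iff]

/-- number of undominated pendants at support `a` -/
def cnt (A : Finset ((V ⊕ Unit) ⊕ (V ⊕ Unit) × Fin k)) (a : V ⊕ Unit) : ℕ :=
  (Finset.univ.filter fun i : Fin k =>
    (Sum.inr (a, i) : (V ⊕ Unit) ⊕ (V ⊕ Unit) × Fin k) ∉ A).card

variable {k}

lemma cnt_le (A : Finset ((V ⊕ Unit) ⊕ (V ⊕ Unit) × Fin k)) (a : V ⊕ Unit) :
    cnt k A a ≤ k := by
  refine (Finset.card_filter_le _ _).trans ?_
  simp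

/- In the following lemmas `A'` stands for `A ∪ N[v]` for the various moves `v`;
it is given by a membership property to avoid decidability-instance mismatches. -/

lemma cnt_move_inl_self {A A' : Finset ((V ⊕ Unit) ⊕ (V ⊕ Unit) × Fin k)} {b : V ⊕ Unit}
    (h : ∀ x, x ∈ A' ↔ x ∈ A ∨ x ∈ closedNF (hatG G k) (Sum.inl b)) :
    cnt k A' b = 0 := by
  unfold cnt
  rw [Finset.card_eq_zero, Finset.filter_eq_empty_iff]
  intro i _
  rw [not_not, h]
  exact Or.inr ((pend_mem_closedNF_inl G k b b i).2 rfl)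

lemma cnt_move_inl_ne {A A' : Finset ((V ⊕ Unit) ⊕ (V ⊕ Unit) × Fin k)} {a b : V ⊕ Unit}
    (h : ∀ x, x ∈ A' ↔ x ∈ A ∨ x ∈ closedNF (hatG G k) (Sum.inl b))
    (hab : a ≠ b) : cnt k A' a = cnt k A a := by
  unfold cnt
  congr 1
  apply Finset.filter_congr
  intro i _
  simp [h, pend_mem_closedNF_inl, hab]

lemma cnt_move_inr_ne {A A' : Finset ((V ⊕ Unit) ⊕ (V ⊕ Unit) × Fin k)} {a b : V ⊕ Unit}
    {j : Fin k} (h : ∀ x, x ∈ A' ↔ x ∈ A ∨ x ∈ closedNF (hatG G k) (Sum.inr (b, j)))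
    (hab : a ≠ b) : cnt k A' a = cnt k A a := by
  unfold cnt
  congr 1
  apply Finset.filter_congr
  intro i _
  simp [h, pend_mem_closedNF_inr, hab]

lemma cnt_move_inr_filter {A A' : Finset ((V ⊕ Unit) ⊕ (V ⊕ Unit) × Fin k)} {b : V ⊕ Unit}
    {j : Fin k} (h : ∀ x, x ∈ A' ↔ x ∈ A ∨ x ∈ closedNF (hatG G k) (Sum.inr (b, j))) :
    (Finset.univ.filter fun i : Fin k =>
        (Sum.inr (b, i) : (V ⊕ Unit) ⊕ (V ⊕ Unit) × Fin k) ∉ A')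
      = (Finset.univ.filter fun i : Fin k =>
        (Sum.inr (b, i) : (V ⊕ Unit) ⊕ (V ⊕ Unit) × Fin k) ∉ A).erase j := by
  ext i
  simp only [Finset.mem_erase, Finset.mem_filter, Finset.mem_univ, true_and, h,
    pend_mem_closedNF_inr, not_or]
  tauto

lemma cnt_move_inr_self_mem {A A' : Finset ((V ⊕ Unit) ⊕ (V ⊕ Unit) × Fin k)} {b : V ⊕ Unit}
    {j : Fin k} (h : ∀ x, x ∈ A' ↔ x ∈ A ∨ x ∈ closedNF (hatG G k) (Sum.inr (b, j)))
    (hj : (Sum.inr (b, j) : (V ⊕ Unit) ⊕ (V ⊕ Unit) × Fin k) ∉ A) :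
    cnt k A' b + 1 = cnt k A b := by
  unfold cnt
  rw [cnt_move_inr_filter G h]
  have hjm : j ∈ Finset.univ.filter fun i : Fin k =>
      (Sum.inr (b, i) : (V ⊕ Unit) ⊕ (V ⊕ Unit) × Fin k) ∉ A := by
    simp [hj]
  rw [Finset.card_erase_of_mem hjm]
  have : 1 ≤ (Finset.univ.filter fun i : Fin k =>
      (Sum.inr (b, i) : (V ⊕ Unit) ⊕ (V ⊕ Unit) × Fin k) ∉ A).card :=
    Finset.card_pos.2 ⟨j, hjm⟩
  omega

lemma cnt_move_inr_self_notmem {A A' : Finset ((V ⊕ Unit) ⊕ (V ⊕ Unit) × Fin k)} {b : V ⊕ Unit}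
    {j : Fin k} (h : ∀ x, x ∈ A' ↔ x ∈ A ∨ x ∈ closedNF (hatG G k) (Sum.inr (b, j)))
    (hj : (Sum.inr (b, j) : (V ⊕ Unit) ⊕ (V ⊕ Unit) × Fin k) ∈ A) :
    cnt k A' b = cnt k A b := by
  unfold cnt
  rw [cnt_move_inr_filter G h]
  rw [Finset.erase_eq_of_notMem]
  simp [hj]

/-- generic per-star sum update -/
lemma sum_update (f : ℕ → ℕ) (A A' : Finset ((V ⊕ Unit) ⊕ (V ⊕ Unit) × Fin k)) (b : V ⊕ Unit)
    (h : ∀ a, a ≠ b → cnt k A' a = cnt k A a) :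
    (∑ a : V ⊕ Unit, f (cnt k A' a)) + f (cnt k A b)
      = (∑ a : V ⊕ Unit, f (cnt k A a)) + f (cnt k A' b) := by
  rw [← Finset.sum_erase_add Finset.univ _ (Finset.mem_univ b),
      ← Finset.sum_erase_add Finset.univ (fun a => f (cnt k A a)) (Finset.mem_univ b)]
  have he : (∑ a ∈ Finset.univ.erase b, f (cnt k A' a))
      = ∑ a ∈ Finset.univ.erase b, f (cnt k A a) :=
    Finset.sum_congr rfl fun a ha => by rw [h a (Finset.mem_erase.1 ha).1]
  rw [he]
  ring

end HatProof

section GameAPI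
variable {V : Type*} [Fintype V] (G : SimpleGraph V)

lemma zVal_of_empty {A : Finset V} (b : Bool) (h : ¬ (zLegal G A).Nonempty) :
    zVal G b A = 0 := by
  rw [zVal, dif_neg h]

lemma zVal_ge_forall (b : Bool) {A : Finset V} {n : ℕ} (hne : (zLegal G A).Nonempty)
    (h : ∀ v ∈ zLegal G A, ∀ B : Finset V,
      (∀ x, x ∈ B ↔ x ∈ A ∨ x ∈ closedNF G v) → n ≤ zVal G (!b) B) :
    1 + n ≤ zVal G b A := by
  rw [zVal, dif_pos hne]
  cases b
  · simp only [Bool.false_eq_true, if_false]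
    obtain ⟨v, hv⟩ := hne
    refine Nat.add_le_add_left ?_ 1
    exact le_trans (h v hv _ (fun x => Finset.mem_union)) (Finset.le_sup'
      (f := fun v : {x // x ∈ zLegal G A} => zVal G true (A ∪ closedNF G v.1))
      (Finset.mem_attach _ ⟨v, hv⟩))
  · simp only [if_true]
    refine Nat.add_le_add_left ?_ 1
    apply Finset.le_inf'
    rintro ⟨v, hv⟩ -
    exact h v hv _ (fun x => Finset.mem_union)

lemma zVal_le_forall (b : Bool) {A : Finset V} {n : ℕ}
    (h : ∀ v ∈ zLegal G A, ∀ B : Finset V,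
      (∀ x, x ∈ B ↔ x ∈ A ∨ x ∈ closedNF G v) → zVal G (!b) B ≤ n) :
    zVal G b A ≤ 1 + n := by
  rw [zVal]
  by_cases h1 : (zLegal G A).Nonempty
  · rw [dif_pos h1]
    cases b
    · simp only [Bool.false_eq_true, if_false]
      refine Nat.add_le_add_left ?_ 1
      apply Finset.sup'_le
      rintro ⟨v, hv⟩ -
      exact h v hv _ (fun x => Finset.mem_union)
    · simp only [if_true]
      obtain ⟨v, hv⟩ := h1
      refine Nat.add_le_add_left ?_ 1
      exact le_trans (Finset.inf'_le
        (f := fun v : {x // x ∈ zLegal G A} => zVal G false (A ∪ closedNF G v.1))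
        (Finset.mem_attach _ ⟨v, hv⟩)) (h v hv _ (fun x => Finset.mem_union))
  · rw [dif_neg h1]
    omega

lemma zVal_true_le_single {A B : Finset V} {v : V} (hv : v ∈ zLegal G A)
    (hB : ∀ x, x ∈ B ↔ x ∈ A ∨ x ∈ closedNF G v) :
    zVal G true A ≤ 1 + zVal G false B := by
  have hBe : B = A ∪ closedNF G v := by
    ext x
    rw [hB, Finset.mem_union]
  subst hBe
  conv_lhs => rw [zVal]
  rw [dif_pos ⟨v, hv⟩]
  simp only [if_true]
  refine Nat.add_le_add_left ?_ 1
  exact Finset.inf'_le _ (Finset.mem_attach _ ⟨v, hv⟩)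

lemma dVal_of_empty {A : Finset V} (b : Bool) (h : ¬ (dLegal G A).Nonempty) :
    dVal G b A = 0 := by
  rw [dVal, dif_neg h]

lemma dVal_true_le_single {A B : Finset V} {v : V} (hv : v ∈ dLegal G A)
    (hB : ∀ x, x ∈ B ↔ x ∈ A ∨ x ∈ closedNF G v) :
    dVal G true A ≤ 1 + dVal G false B := by
  have hBe : B = A ∪ closedNF G v := by
    ext x
    rw [hB, Finset.mem_union]
  subst hBe
  conv_lhs => rw [dVal]
  rw [dif_pos ⟨v, hv⟩]
  simp only [if_true]
  refine Nat.add_le_add_left ?_ 1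
  exact Finset.inf'_le _ (Finset.mem_attach _ ⟨v, hv⟩)

lemma dVal_false_ge_single {A B : Finset V} {v : V} (hv : v ∈ dLegal G A)
    (hB : ∀ x, x ∈ B ↔ x ∈ A ∨ x ∈ closedNF G v) :
    1 + dVal G true B ≤ dVal G false A := by
  have hBe : B = A ∪ closedNF G v := by
    ext x
    rw [hB, Finset.mem_union]
  subst hBe
  conv_rhs => rw [dVal]
  rw [dif_pos ⟨v, hv⟩]
  simp only [Bool.false_eq_true, if_false]
  refine Nat.add_le_add_left ?_ 1
  exact Finset.le_sup'
    (f := fun v : {x // x ∈ dLegal G A} => dVal G true (A ∪ closedNF G v.1))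
    (Finset.mem_attach _ ⟨v, hv⟩)

lemma dVal_false_le_forall {A : Finset V} {n : ℕ}
    (h : ∀ v ∈ dLegal G A, ∀ B : Finset V,
      (∀ x, x ∈ B ↔ x ∈ A ∨ x ∈ closedNF G v) → dVal G true B ≤ n) :
    dVal G false A ≤ 1 + n := by
  rw [dVal]
  by_cases h1 : (dLegal G A).Nonempty
  · rw [dif_pos h1]
    simp only [Bool.false_eq_true, if_false]
    refine Nat.add_le_add_left ?_ 1
    apply Finset.sup'_le
    rintro ⟨v, hv⟩ -
    exact h v hv _ (fun x => Finset.mem_union)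
  · rw [dif_neg h1]
    omega

lemma dVal_true_ge_forall {A : Finset V} {n : ℕ} (hne : (dLegal G A).Nonempty)
    (h : ∀ v ∈ dLegal G A, ∀ B : Finset V,
      (∀ x, x ∈ B ↔ x ∈ A ∨ x ∈ closedNF G v) → n ≤ dVal G false B) :
    1 + n ≤ dVal G true A := by
  rw [dVal, dif_pos hne]
  simp only [if_true]
  refine Nat.add_le_add_left ?_ 1
  apply Finset.le_inf'
  rintro ⟨v, hv⟩ -
  exact h v hv _ (fun x => Finset.mem_union)

/-- measure decrease, instance-free form (Z-game legality) -/
lemma zLegal_step_card {A B : Finset V} {v : V} (hv : v ∈ zLegal G A)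
    (hB : ∀ x, x ∈ B ↔ x ∈ A ∨ x ∈ closedNF G v) :
    Fintype.card V - B.card < Fintype.card V - A.card := by
  obtain ⟨wit, hw1, hw2⟩ := Finset.not_subset.mp (Finset.mem_filter.1 hv).2
  have hsub : A ⊆ B := fun x hx => (hB x).2 (Or.inl hx)
  have hwB : wit ∈ B := (hB wit).2 (Or.inr (openNF_subset_closedNF G v hw1))
  have hcard : A.card < B.card :=
    Finset.card_lt_card ⟨hsub, fun hs => hw2 (hs hwB)⟩
  have h1 : B.card ≤ Fintype.card V := by
    simpa using Finset.card_le_univ B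
  omega

/-- measure decrease, instance-free form (domination-game legality) -/
lemma dLegal_step_card {A B : Finset V} {v : V} (hv : v ∈ dLegal G A)
    (hB : ∀ x, x ∈ B ↔ x ∈ A ∨ x ∈ closedNF G v) :
    Fintype.card V - B.card < Fintype.card V - A.card := by
  obtain ⟨wit, hw1, hw2⟩ := Finset.not_subset.mp (Finset.mem_filter.1 hv).2
  have hsub : A ⊆ B := fun x hx => (hB x).2 (Or.inl hx)
  have hwB : wit ∈ B := (hB wit).2 (Or.inr hw1)
  have hcard : A.card < B.card :=
    Finset.card_lt_card ⟨hsub, fun hs => hw2 (hs hwB)⟩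
  have h1 : B.card ≤ Fintype.card V := by
    simpa using Finset.card_le_univ B
  omega

end GameAPI

section Potentials
variable {V : Type*} [Fintype V] (G : SimpleGraph V) (k : ℕ)

/-- number of open stars -/
def mS (A : Finset ((V ⊕ Unit) ⊕ (V ⊕ Unit) × Fin k)) : ℕ :=
  ∑ a : V ⊕ Unit, (if 1 ≤ cnt k A a then 1 else 0)

/-- weight of a star with `c` undominated pendants -/
def wgt (c : ℕ) : ℕ := if c = 0 then 0 else 2 ^ (k - c)

/-- total weight -/
def Sg (A : Finset ((V ⊕ Unit) ⊕ (V ⊕ Unit) × Fin k)) : ℕ :=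
  ∑ a : V ⊕ Unit, wgt k (cnt k A a)

variable {G k}

lemma wgt_zero : wgt k 0 = 0 := rfl

lemma wgt_pos {c : ℕ} (hc : c ≠ 0) : 1 ≤ wgt k c := by
  simp only [wgt, if_neg hc]
  exact Nat.one_le_two_pow

lemma wgt_one : wgt k 1 = 2 ^ (k - 1) := by simp [wgt]

lemma wgt_pred {c : ℕ} (h2 : 2 ≤ c) (hck : c ≤ k) : wgt k (c - 1) = 2 * wgt k c := by
  have h1 : c - 1 ≠ 0 := by omega
  have h0 : c ≠ 0 := by omega
  simp only [wgt, if_neg h1, if_neg h0]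
  have : k - (c - 1) = (k - c) + 1 := by omega
  rw [this, pow_succ]
  ring

lemma wgt_le_Q {c : ℕ} (h1 : 1 ≤ c) : wgt k c ≤ 2 ^ (k - 1) := by
  simp only [wgt, if_neg (by omega : ¬ c = 0)]
  exact Nat.pow_le_pow_right (by norm_num) (by omega)

lemma two_wgt_le_Q {c : ℕ} (h2 : 2 ≤ c) (hk : 2 ≤ k) : 2 * wgt k c ≤ 2 ^ (k - 1) := by
  simp only [wgt, if_neg (by omega : ¬ c = 0)]
  have h : 2 * 2 ^ (k - c) = 2 ^ ((k - c) + 1) := by rw [pow_succ]; ring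
  rw [h]
  exact Nat.pow_le_pow_right (by norm_num) (by omega)

lemma wgt_dvd {c cm : ℕ} (hc : c ≤ cm) (hcm : cm ≠ 0) : wgt k cm ∣ wgt k c := by
  rcases Nat.eq_zero_or_pos c with hc0 | hc0
  · simp [hc0, wgt]
  · simp only [wgt, if_neg hcm, if_neg (by omega : ¬ c = 0)]
    exact pow_dvd_pow 2 (by omega)

lemma one_le_mS {A : Finset ((V ⊕ Unit) ⊕ (V ⊕ Unit) × Fin k)} {a : V ⊕ Unit}
    (ha : 1 ≤ cnt k A a) : 1 ≤ mS k A := by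
  unfold mS
  have h := Finset.single_le_sum
    (f := fun a : V ⊕ Unit => if 1 ≤ cnt k A a then 1 else 0)
    (fun i _ => Nat.zero_le _) (Finset.mem_univ a)
  simpa [ha] using h

lemma exists_open_of_mS_ne_zero {A : Finset ((V ⊕ Unit) ⊕ (V ⊕ Unit) × Fin k)}
    (h : mS k A ≠ 0) : ∃ a : V ⊕ Unit, 1 ≤ cnt k A a := by
  by_contra hc
  push_neg at hc
  apply h
  unfold mS
  apply Finset.sum_eq_zero
  intro a _
  simp only [if_neg (by have := hc a; omega : ¬ 1 ≤ cnt k A a)]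

lemma exists_pendant {A : Finset ((V ⊕ Unit) ⊕ (V ⊕ Unit) × Fin k)} {a : V ⊕ Unit}
    (h : 1 ≤ cnt k A a) :
    ∃ j : Fin k, (Sum.inr (a, j) : (V ⊕ Unit) ⊕ (V ⊕ Unit) × Fin k) ∉ A := by
  obtain ⟨j, hj⟩ := Finset.card_pos.1 h
  exact ⟨j, (Finset.mem_filter.1 hj).2⟩

lemma inl_mem_dLegal {A : Finset ((V ⊕ Unit) ⊕ (V ⊕ Unit) × Fin k)} {a : V ⊕ Unit}
    (h : 1 ≤ cnt k A a) :
    (Sum.inl a : (V ⊕ Unit) ⊕ (V ⊕ Unit) × Fin k) ∈ dLegal (hatG G k) A := by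
  obtain ⟨j, hj⟩ := exists_pendant h
  simp only [dLegal, Finset.mem_filter, Finset.mem_univ, true_and]
  exact fun hs => hj (hs ((pend_mem_closedNF_inl G k a a j).2 rfl))

lemma pend_mem_dLegal {A : Finset ((V ⊕ Unit) ⊕ (V ⊕ Unit) × Fin k)} {a : V ⊕ Unit} {j : Fin k}
    (hj : (Sum.inr (a, j) : (V ⊕ Unit) ⊕ (V ⊕ Unit) × Fin k) ∉ A) :
    (Sum.inr (a, j) : (V ⊕ Unit) ⊕ (V ⊕ Unit) × Fin k) ∈ dLegal (hatG G k) A := by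
  simp only [dLegal, Finset.mem_filter, Finset.mem_univ, true_and]
  exact fun hs => hj (hs (self_mem_closedNF _ _))

lemma inl_mem_zLegal {A : Finset ((V ⊕ Unit) ⊕ (V ⊕ Unit) × Fin k)} {a : V ⊕ Unit}
    (h : 1 ≤ cnt k A a) :
    (Sum.inl a : (V ⊕ Unit) ⊕ (V ⊕ Unit) × Fin k) ∈ zLegal (hatG G k) A := by
  obtain ⟨j, hj⟩ := exists_pendant h
  simp only [zLegal, Finset.mem_filter, Finset.mem_univ, true_and]
  refine fun hs => hj (hs ?_)
  rw [mem_openNF']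
  exact (hatG_adj_inl_inr G k a a j).2 rfl

/-- Every move touches the pendants of at most one star. -/
lemma move_cases {A B : Finset ((V ⊕ Unit) ⊕ (V ⊕ Unit) × Fin k)}
    (v : (V ⊕ Unit) ⊕ (V ⊕ Unit) × Fin k)
    (hB : ∀ x, x ∈ B ↔ x ∈ A ∨ x ∈ closedNF (hatG G k) v) :
    ∃ b : V ⊕ Unit,
      (∀ a, a ≠ b → cnt k B a = cnt k A a) ∧
      (cnt k B b = 0 ∨ cnt k B b = cnt k A b ∨
       (cnt k B b + 1 = cnt k A b ∧ 2 ≤ cnt k A b)) := by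
  cases v with
  | inl b =>
    exact ⟨b, fun a ha => cnt_move_inl_ne G hB ha, Or.inl (cnt_move_inl_self G hB)⟩
  | inr p =>
    obtain ⟨b, j⟩ := p
    refine ⟨b, fun a ha => cnt_move_inr_ne G hB ha, ?_⟩
    by_cases hj : (Sum.inr (b, j) : (V ⊕ Unit) ⊕ (V ⊕ Unit) × Fin k) ∈ A
    · exact Or.inr (Or.inl (cnt_move_inr_self_notmem G hB hj))
    · have hdec := cnt_move_inr_self_mem G hB hj
      rcases Nat.lt_or_ge (cnt k A b) 2 with h2 | h2
      · exact Or.inl (by omega)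
      · exact Or.inr (Or.inr ⟨hdec, h2⟩)

/-- Z-game lower bound: at least one move per open star. -/
lemma mS_le_zVal : ∀ (N : ℕ) (A : Finset ((V ⊕ Unit) ⊕ (V ⊕ Unit) × Fin k)) (bb : Bool),
    Fintype.card ((V ⊕ Unit) ⊕ (V ⊕ Unit) × Fin k) - A.card ≤ N →
    mS k A ≤ zVal (hatG G k) bb A := by
  intro N
  induction N with
  | zero =>
    intro A bb hN
    have hA : ∀ x : (V ⊕ Unit) ⊕ (V ⊕ Unit) × Fin k, x ∈ A := by
      have h1 : Fintype.card ((V ⊕ Unit) ⊕ (V ⊕ Unit) × Fin k) ≤ A.card := by omega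
      have h2 : A = Finset.univ :=
        Finset.eq_univ_of_card A (le_antisymm (by simpa using Finset.card_le_univ A) h1)
      intro x
      rw [h2]
      exact Finset.mem_univ x
    have hm : mS k A = 0 := by
      unfold mS
      apply Finset.sum_eq_zero
      intro a _
      have hc : cnt k A a = 0 := by
        unfold cnt
        rw [Finset.card_eq_zero, Finset.filter_eq_empty_iff]
        intro i _
        simp [hA]
      simp [hc]
    rw [hm]
    exact Nat.zero_le _
  | succ N ih =>
    intro A bb hN
    by_cases hm : mS k A = 0
    · rw [hm]; exact Nat.zero_le _
    obtain ⟨a, ha⟩ := exists_open_of_mS_ne_zero hm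
    have hm1 := one_le_mS ha
    have hne : (zLegal (hatG G k) A).Nonempty := ⟨Sum.inl a, inl_mem_zLegal ha⟩
    have key := zVal_ge_forall (hatG G k) bb (n := mS k A - 1) hne ?_
    · omega
    intro v hv B hB
    have hmeas : Fintype.card ((V ⊕ Unit) ⊕ (V ⊕ Unit) × Fin k) - B.card ≤ N := by
      have := zLegal_step_card (hatG G k) hv hB
      omega
    have hIH := ih B (!bb) hmeas
    obtain ⟨b', hb1, _⟩ := move_cases v hB
    have hupd : mS k B + (if 1 ≤ cnt k A b' then 1 else 0)
        = mS k A + (if 1 ≤ cnt k B b' then 1 else 0) :=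
      sum_update (fun c => if 1 ≤ c then 1 else 0) A B b' hb1
    have h1 : (if 1 ≤ cnt k A b' then 1 else 0) ≤ 1 := by split <;> omega
    have h2 : (if 1 ≤ cnt k B b' then 1 else 0) ≤ 1 := by split <;> omega
    omega

end Potentials

section ZUpper
variable {V : Type*} [Fintype V] (G : SimpleGraph V) (k : ℕ)

lemma hatG_adj_inr_inl (a b : V ⊕ Unit) (i : Fin k) :
    (hatG G k).Adj (Sum.inr (a, i)) (Sum.inl b) ↔ b = a := by
  rw [SimpleGraph.adj_comm, hatG_adj_inl_inr]
  exact eq_comm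

/-- potential for the Z-game upper bound: vertices of `V` whose open
neighborhood is not yet dominated -/
def qS (A : Finset ((V ⊕ Unit) ⊕ (V ⊕ Unit) × Fin k)) : ℕ :=
  ∑ v : V, (if openNF (hatG G k) (Sum.inl (Sum.inl v)) ⊆ A then 0 else 1)

variable {G k}

lemma supports_mem_of_closedW {A : Finset ((V ⊕ Unit) ⊕ (V ⊕ Unit) × Fin k)}
    (hW : ∀ x ∈ closedNF (hatG G k)
      (Sum.inl (Sum.inr ()) : (V ⊕ Unit) ⊕ (V ⊕ Unit) × Fin k), x ∈ A)
    (a : V ⊕ Unit) : (Sum.inl a : (V ⊕ Unit) ⊕ (V ⊕ Unit) × Fin k) ∈ A := by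
  cases a with
  | inl v =>
    exact hW _ ((mem_closedNF' _ _ _).2 (Or.inr (hatG_adj_w_inl G k v)))
  | inr u =>
    exact hW _ ((mem_closedNF' _ _ _).2 (Or.inl rfl))

lemma zLegal_shape {A : Finset ((V ⊕ Unit) ⊕ (V ⊕ Unit) × Fin k)}
    (hW : ∀ x ∈ closedNF (hatG G k)
      (Sum.inl (Sum.inr ()) : (V ⊕ Unit) ⊕ (V ⊕ Unit) × Fin k), x ∈ A)
    {x : (V ⊕ Unit) ⊕ (V ⊕ Unit) × Fin k} (hx : x ∈ zLegal (hatG G k) A) :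
    ∃ u : V, x = Sum.inl (Sum.inl u) ∧
      ¬ openNF (hatG G k) (Sum.inl (Sum.inl u)) ⊆ A := by
  have hleg : ¬ openNF (hatG G k) x ⊆ A := by
    have h := hx
    simp only [zLegal, Finset.mem_filter, Finset.mem_univ, true_and] at h
    exact h
  rcases x with (u | u) | p
  · exact ⟨u, rfl, hleg⟩
  · cases u
    exact absurd (fun y hy => hW y (openNF_subset_closedNF _ _ hy)) hleg
  · obtain ⟨a, i⟩ := p
    exfalso
    apply hleg
    intro y hy
    rw [mem_openNF'] at hy
    rcases y with b | q
    · obtain rfl : b = a := (hatG_adj_inr_inl G k a b i).1 hy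
      exact supports_mem_of_closedW hW _
    · exact absurd hy (hatG_not_adj_inr G k _ _)

lemma qS_le_card (A : Finset ((V ⊕ Unit) ⊕ (V ⊕ Unit) × Fin k)) :
    qS G k A ≤ Fintype.card V := by
  unfold qS
  calc ∑ v : V, (if openNF (hatG G k) (Sum.inl (Sum.inl v)) ⊆ A then 0 else 1)
      ≤ ∑ _v : V, 1 := Finset.sum_le_sum (fun i _ => by split <;> omega)
    _ = Fintype.card V := by simp

lemma zVal_le_qS : ∀ (N : ℕ) (A : Finset ((V ⊕ Unit) ⊕ (V ⊕ Unit) × Fin k)) (bb : Bool),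
    Fintype.card ((V ⊕ Unit) ⊕ (V ⊕ Unit) × Fin k) - A.card ≤ N →
    (∀ x ∈ closedNF (hatG G k)
      (Sum.inl (Sum.inr ()) : (V ⊕ Unit) ⊕ (V ⊕ Unit) × Fin k), x ∈ A) →
    zVal (hatG G k) bb A ≤ qS G k A := by
  intro N
  induction N with
  | zero =>
    intro A bb hN hW
    have hA : ∀ x : (V ⊕ Unit) ⊕ (V ⊕ Unit) × Fin k, x ∈ A := by
      have h1 : Fintype.card ((V ⊕ Unit) ⊕ (V ⊕ Unit) × Fin k) ≤ A.card := by omega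
      have h2 : A = Finset.univ :=
        Finset.eq_univ_of_card A (le_antisymm (by simpa using Finset.card_le_univ A) h1)
      intro x; rw [h2]; exact Finset.mem_univ x
    have : ¬ (zLegal (hatG G k) A).Nonempty := by
      rintro ⟨v, hv⟩
      simp only [zLegal, Finset.mem_filter, Finset.mem_univ, true_and] at hv
      exact hv (fun y _ => hA y)
    rw [zVal_of_empty _ _ this]
    exact Nat.zero_le _
  | succ N ih =>
    intro A bb hN hW
    by_cases hne : (zLegal (hatG G k) A).Nonempty
    · obtain ⟨x0, hx0⟩ := hne
      obtain ⟨u0, rfl, hu0⟩ := zLegal_shape hW hx0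
      have hq1 : 1 ≤ qS G k A := by
        unfold qS
        have h := Finset.single_le_sum
          (f := fun v : V => if openNF (hatG G k) (Sum.inl (Sum.inl v)) ⊆ A then 0 else 1)
          (fun i _ => Nat.zero_le _) (Finset.mem_univ u0)
        simpa [hu0] using h
      have key := zVal_le_forall (hatG G k) bb (A := A) (n := qS G k A - 1) ?_
      · omega
      intro v hv B hB
      obtain ⟨u, rfl, hu⟩ := zLegal_shape hW hv
      have hWB : ∀ x ∈ closedNF (hatG G k)
          (Sum.inl (Sum.inr ()) : (V ⊕ Unit) ⊕ (V ⊕ Unit) × Fin k), x ∈ B :=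
        fun x hx => (hB x).2 (Or.inl (hW x hx))
      have hmeas : Fintype.card ((V ⊕ Unit) ⊕ (V ⊕ Unit) × Fin k) - B.card ≤ N := by
        have := zLegal_step_card (hatG G k) hv hB
        omega
      have hIH := ih B (!bb) hmeas hWB
      have hAB : A ⊆ B := fun x hx => (hB x).2 (Or.inl hx)
      have hqdec : qS G k B + 1 ≤ qS G k A := by
        unfold qS
        have hlt : (∑ v : V, (if openNF (hatG G k) (Sum.inl (Sum.inl v)) ⊆ B then 0 else 1))
            < ∑ v : V, (if openNF (hatG G k) (Sum.inl (Sum.inl v)) ⊆ A then 0 else 1) := by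
          apply Finset.sum_lt_sum
          · intro i _
            split
            · exact Nat.zero_le _
            · next hiB =>
              rw [if_neg]
              intro hiA
              exact hiB (fun y hy => hAB (hiA hy))
          · refine ⟨u, Finset.mem_univ u, ?_⟩
            rw [if_neg hu, if_pos]
            · omega
            · intro y hy
              exact (hB y).2 (Or.inr (openNF_subset_closedNF _ _ hy))
        omega
      omega
    · rw [zVal_of_empty _ _ hne]
      exact Nat.zero_le _

end ZUpper

section DUpper
variable {V : Type*} [Fintype V] (G : SimpleGraph V) (k : ℕ)

/-- potential for the domination game upper bound -/
def muS (A : Finset ((V ⊕ Unit) ⊕ (V ⊕ Unit) × Fin k)) : ℕ :=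
  ∑ a : V ⊕ Unit, (if closedNF (hatG G k) (Sum.inl a) ⊆ A then 0 else 1)

variable {G k}

lemma mem_closed_support (x : (V ⊕ Unit) ⊕ (V ⊕ Unit) × Fin k) :
    ∃ a : V ⊕ Unit, x ∈ closedNF (hatG G k) (Sum.inl a) := by
  rcases x with a | p
  · exact ⟨a, self_mem_closedNF _ _⟩
  · obtain ⟨a, i⟩ := p
    exact ⟨a, (pend_mem_closedNF_inl G k a a i).2 rfl⟩

lemma muS_zero_univ {A : Finset ((V ⊕ Unit) ⊕ (V ⊕ Unit) × Fin k)}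
    (h : muS G k A = 0) : ∀ x, x ∈ A := by
  intro x
  obtain ⟨a, ha⟩ := mem_closed_support x
  have hterm := (Finset.sum_eq_zero_iff.1 h) a (Finset.mem_univ a)
  by_cases hc : closedNF (hatG G k) (Sum.inl a) ⊆ A
  · exact hc ha
  · rw [if_neg hc] at hterm
    omega

lemma dLegal_empty_of_univ {A : Finset ((V ⊕ Unit) ⊕ (V ⊕ Unit) × Fin k)}
    (hA : ∀ x, x ∈ A) : ¬ (dLegal (hatG G k) A).Nonempty := by
  rintro ⟨v, hv⟩
  simp only [dLegal, Finset.mem_filter, Finset.mem_univ, true_and] at hv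
  exact hv (fun y _ => hA y)

lemma exists_bad_support {A : Finset ((V ⊕ Unit) ⊕ (V ⊕ Unit) × Fin k)}
    (h : muS G k A ≠ 0) : ∃ a : V ⊕ Unit, ¬ closedNF (hatG G k) (Sum.inl a) ⊆ A := by
  by_contra hc
  push_neg at hc
  apply h
  unfold muS
  apply Finset.sum_eq_zero
  intro a _
  rw [if_pos (hc a)]

lemma one_le_muS {A : Finset ((V ⊕ Unit) ⊕ (V ⊕ Unit) × Fin k)} {a : V ⊕ Unit}
    (ha : ¬ closedNF (hatG G k) (Sum.inl a) ⊆ A) : 1 ≤ muS G k A := by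
  unfold muS
  have h := Finset.single_le_sum
    (f := fun a : V ⊕ Unit => if closedNF (hatG G k) (Sum.inl a) ⊆ A then 0 else 1)
    (fun i _ => Nat.zero_le _) (Finset.mem_univ a)
  simpa [ha] using h

lemma muS_mono {A B : Finset ((V ⊕ Unit) ⊕ (V ⊕ Unit) × Fin k)}
    (hAB : A ⊆ B) : muS G k B ≤ muS G k A := by
  unfold muS
  apply Finset.sum_le_sum
  intro a _
  split
  · exact Nat.zero_le _
  · next hB =>
    rw [if_neg]
    intro hA
    exact hB (fun y hy => hAB (hA hy))

lemma muS_dec {A B : Finset ((V ⊕ Unit) ⊕ (V ⊕ Unit) × Fin k)} {a0 : V ⊕ Unit}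
    (hB : ∀ x, x ∈ B ↔ x ∈ A ∨ x ∈ closedNF (hatG G k) (Sum.inl a0))
    (ha0 : ¬ closedNF (hatG G k) (Sum.inl a0) ⊆ A) :
    muS G k B + 1 ≤ muS G k A := by
  have hAB : A ⊆ B := fun x hx => (hB x).2 (Or.inl hx)
  unfold muS
  have hlt : (∑ a : V ⊕ Unit, (if closedNF (hatG G k) (Sum.inl a) ⊆ B then 0 else 1))
      < ∑ a : V ⊕ Unit, (if closedNF (hatG G k) (Sum.inl a) ⊆ A then 0 else 1) := by
    apply Finset.sum_lt_sum
    · intro i _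
      split
      · exact Nat.zero_le _
      · next hiB =>
        rw [if_neg]
        intro hiA
        exact hiB (fun y hy => hAB (hiA hy))
    · refine ⟨a0, Finset.mem_univ a0, ?_⟩
      rw [if_neg ha0]
      split
      · omega
      · next hc => exact absurd (fun y hy => (hB y).2 (Or.inr hy)) hc
  omega

lemma dVal_le_muS : ∀ (N : ℕ) (A : Finset ((V ⊕ Unit) ⊕ (V ⊕ Unit) × Fin k)),
    Fintype.card ((V ⊕ Unit) ⊕ (V ⊕ Unit) × Fin k) - A.card ≤ N →
    dVal (hatG G k) true A ≤ 2 * muS G k A - 1 ∧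
    dVal (hatG G k) false A ≤ 2 * muS G k A := by
  intro N
  induction N with
  | zero =>
    intro A hN
    have hA : ∀ x : (V ⊕ Unit) ⊕ (V ⊕ Unit) × Fin k, x ∈ A := by
      have h1 : Fintype.card ((V ⊕ Unit) ⊕ (V ⊕ Unit) × Fin k) ≤ A.card := by omega
      have h2 : A = Finset.univ :=
        Finset.eq_univ_of_card A (le_antisymm (by simpa using Finset.card_le_univ A) h1)
      intro x; rw [h2]; exact Finset.mem_univ x
    rw [dVal_of_empty _ _ (dLegal_empty_of_univ hA), dVal_of_empty _ _ (dLegal_empty_of_univ hA)]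
    exact ⟨Nat.zero_le _, Nat.zero_le _⟩
  | succ N ih =>
    intro A hN
    constructor
    · by_cases hmu : muS G k A = 0
      · rw [dVal_of_empty _ _ (dLegal_empty_of_univ (muS_zero_univ hmu))]
        exact Nat.zero_le _
      · obtain ⟨a0, ha0⟩ := exists_bad_support hmu
        have hmu1 := one_le_muS ha0
        have hv : (Sum.inl a0 : (V ⊕ Unit) ⊕ (V ⊕ Unit) × Fin k) ∈ dLegal (hatG G k) A := by
          simp only [dLegal, Finset.mem_filter, Finset.mem_univ, true_and]
          exact ha0
        have h1 := dVal_true_le_single (hatG G k) hv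
          (B := A ∪ closedNF (hatG G k) (Sum.inl a0)) (fun x => Finset.mem_union)
        have hmeas : Fintype.card ((V ⊕ Unit) ⊕ (V ⊕ Unit) × Fin k)
            - (A ∪ closedNF (hatG G k) (Sum.inl a0)).card ≤ N := by
          have := dLegal_step_card (hatG G k) hv
            (B := A ∪ closedNF (hatG G k) (Sum.inl a0)) (fun x => Finset.mem_union)
          omega
        have hIH := (ih _ hmeas).2
        have hdec := muS_dec (A := A) (B := A ∪ closedNF (hatG G k) (Sum.inl a0))
          (fun x => Finset.mem_union) ha0
        omega
    · by_cases hne : (dLegal (hatG G k) A).Nonempty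
      · have hmu1 : 1 ≤ muS G k A := by
          obtain ⟨v, hv⟩ := hne
          have hleg : ¬ closedNF (hatG G k) v ⊆ A := by
            have h := hv
            simp only [dLegal, Finset.mem_filter, Finset.mem_univ, true_and] at h
            exact h
          obtain ⟨x, hx1, hx2⟩ := Finset.not_subset.mp hleg
          obtain ⟨a, ha⟩ := mem_closed_support x
          exact one_le_muS (fun hs => hx2 (hs ha))
        have key := dVal_false_le_forall (hatG G k) (A := A) (n := 2 * muS G k A - 1) ?_
        · omega
        intro v hv B hB
        have hmeas : Fintype.card ((V ⊕ Unit) ⊕ (V ⊕ Unit) × Fin k) - B.card ≤ N := by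
          have := dLegal_step_card (hatG G k) hv hB
          omega
        have hIH := (ih B hmeas).1
        have hAB : A ⊆ B := fun x hx => (hB x).2 (Or.inl hx)
        have hmono := muS_mono (G := G) (k := k) hAB
        omega
      · rw [dVal_of_empty _ _ hne]
        exact Nat.zero_le _

end DUpper

section DLower
variable {V : Type*} [Fintype V] {G : SimpleGraph V} {k : ℕ}

lemma Sg_dvd {A : Finset ((V ⊕ Unit) ⊕ (V ⊕ Unit) × Fin k)} {c : ℕ}
    (hmax : ∀ a : V ⊕ Unit, cnt k A a ≤ c) (hc : c ≠ 0) : wgt k c ∣ Sg k A := by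
  unfold Sg
  exact Finset.dvd_sum (fun a _ => wgt_dvd (hmax a) hc)

lemma Q_pos : 0 < 2 ^ (k - 1) := pow_pos (by norm_num) _

/-- The main Staller invariant for the domination game on `Ĝ`. -/
lemma dVal_lower (hk : 2 ≤ k) :
    ∀ (N : ℕ) (A : Finset ((V ⊕ Unit) ⊕ (V ⊕ Unit) × Fin k)),
    Fintype.card ((V ⊕ Unit) ⊕ (V ⊕ Unit) × Fin k) - A.card ≤ N →
    ((∀ t : ℕ, 1 ≤ t → Sg k A ≤ t * 2 ^ (k - 1) →
        2 * mS k A ≤ dVal (hatG G k) true A + t) ∧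
     (∀ t : ℕ, Sg k A < (t + 1) * 2 ^ (k - 1) →
        2 * mS k A ≤ dVal (hatG G k) false A + t)) := by
  intro N
  induction N with
  | zero =>
    intro A hN
    have hA : ∀ x : (V ⊕ Unit) ⊕ (V ⊕ Unit) × Fin k, x ∈ A := by
      have h1 : Fintype.card ((V ⊕ Unit) ⊕ (V ⊕ Unit) × Fin k) ≤ A.card := by omega
      have h2 : A = Finset.univ :=
        Finset.eq_univ_of_card A (le_antisymm (by simpa using Finset.card_le_univ A) h1)
      intro x; rw [h2]; exact Finset.mem_univ x
    have hm : mS k A = 0 := by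
      unfold mS
      apply Finset.sum_eq_zero
      intro a _
      have hc : cnt k A a = 0 := by
        unfold cnt
        rw [Finset.card_eq_zero, Finset.filter_eq_empty_iff]
        intro i _
        simp [hA]
      simp [hc]
    exact ⟨fun t _ _ => by omega, fun t _ => by omega⟩
  | succ N ih =>
    intro A hN
    constructor
    · -- Dominator to move
      intro t ht hSg
      by_cases hm : mS k A = 0
      · omega
      by_cases htr : 2 * mS k A ≤ t
      · omega
      obtain ⟨a, ha⟩ := exists_open_of_mS_ne_zero hm
      have hne : (dLegal (hatG G k) A).Nonempty := ⟨Sum.inl a, inl_mem_dLegal ha⟩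
      have key := dVal_true_ge_forall (hatG G k) (A := A) (n := 2 * mS k A - t - 1) hne ?_
      · omega
      intro v hv B hB
      have hmeas : Fintype.card ((V ⊕ Unit) ⊕ (V ⊕ Unit) × Fin k) - B.card ≤ N := by
        have := dLegal_step_card (hatG G k) hv hB
        omega
      have hIH := (ih B hmeas).2
      obtain ⟨b', hb1, hshape⟩ := move_cases v hB
      have hupdM : mS k B + (if 1 ≤ cnt k A b' then 1 else 0)
          = mS k A + (if 1 ≤ cnt k B b' then 1 else 0) :=
        sum_update (fun c => if 1 ≤ c then 1 else 0) A B b' hb1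
      have hupdS : Sg k B + wgt k (cnt k A b') = Sg k A + wgt k (cnt k B b') :=
        sum_update (wgt k) A B b' hb1
      have hQ : 0 < 2 ^ (k - 1) := Q_pos
      have hQe : (t + 1) * 2 ^ (k - 1) = t * 2 ^ (k - 1) + 2 ^ (k - 1) := by ring
      rcases hshape with h0 | heq | ⟨hdec, h2⟩
      · -- star b' got closed (or was already empty)
        have eB : (if 1 ≤ cnt k B b' then 1 else 0) = 0 := by simp [h0]
        have wB : wgt k (cnt k B b') = 0 := by rw [h0, wgt_zero]
        by_cases hc0 : cnt k A b' = 0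
        · -- no star was touched at all
          have eA : (if 1 ≤ cnt k A b' then 1 else 0) = 0 := by simp [hc0]
          have wA : wgt k (cnt k A b') = 0 := by rw [hc0, wgt_zero]
          have hIHt := hIH t (by omega)
          omega
        · -- a genuine kill
          have eA : (if 1 ≤ cnt k A b' then 1 else 0) = 1 := by
            rw [if_pos (by omega)]
          have wA : 1 ≤ wgt k (cnt k A b') := wgt_pos hc0
          have hIHt := hIH (t - 1) (by
            have hh : (t - 1) + 1 = t := by omega
            rw [hh]
            omega)
          omega
      · -- nothing changed
        have hms : mS k B = mS k A := by rw [heq] at hupdM; omega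
        have hsg : Sg k B = Sg k A := by rw [heq] at hupdS; omega
        have hIHt := hIH t (by omega)
        omega
      · -- an eat on a star with at least 2 pendants left
        have hck : cnt k A b' ≤ k := cnt_le A b'
        have hwB : wgt k (cnt k B b') = 2 * wgt k (cnt k A b') := by
          have hc : cnt k B b' = cnt k A b' - 1 := by omega
          rw [hc]
          exact wgt_pred h2 hck
        have hw2 : 2 * wgt k (cnt k A b') ≤ 2 ^ (k - 1) := two_wgt_le_Q h2 hk
        have hw1 : 1 ≤ wgt k (cnt k A b') := wgt_pos (by omega)
        have eA : (if 1 ≤ cnt k A b' then 1 else 0) = 1 := by rw [if_pos (by omega)]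
        have eB : (if 1 ≤ cnt k B b' then 1 else 0) = 1 := by rw [if_pos (by omega)]
        have hIHt := hIH t (by
          -- Sg B = Sg A + wgt (cnt A b') < (t+1) * Q
          have : Sg k B = Sg k A + wgt k (cnt k A b') := by omega
          have hlt : wgt k (cnt k A b') < 2 ^ (k - 1) := by omega
          calc Sg k B = Sg k A + wgt k (cnt k A b') := this
            _ < t * 2 ^ (k - 1) + 2 ^ (k - 1) := by omega
            _ = (t + 1) * 2 ^ (k - 1) := by ring)
        omega
    · -- Staller to move
      intro t hSg
      by_cases hm : mS k A = 0
      · omega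
      by_cases htr : 2 * mS k A ≤ t
      · omega
      obtain ⟨a1, ha1⟩ := exists_open_of_mS_ne_zero hm
      obtain ⟨u, -, hmax⟩ := Finset.exists_max_image Finset.univ (fun a => cnt k A a)
        ⟨a1, Finset.mem_univ a1⟩
      have hu1 : 1 ≤ cnt k A u := le_trans ha1 (hmax a1 (Finset.mem_univ a1))
      obtain ⟨j, hj⟩ := exists_pendant hu1
      have hv : (Sum.inr (u, j) : (V ⊕ Unit) ⊕ (V ⊕ Unit) × Fin k) ∈ dLegal (hatG G k) A :=
        pend_mem_dLegal hj
      have hsingle := dVal_false_ge_single (hatG G k) hv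
        (B := A ∪ closedNF (hatG G k) (Sum.inr (u, j))) (fun x => Finset.mem_union)
      set B := A ∪ closedNF (hatG G k) (Sum.inr (u, j)) with hBdef
      have hBmem : ∀ x, x ∈ B ↔ x ∈ A ∨ x ∈ closedNF (hatG G k) (Sum.inr (u, j)) :=
        fun x => Finset.mem_union
      have hmeas : Fintype.card ((V ⊕ Unit) ⊕ (V ⊕ Unit) × Fin k) - B.card ≤ N := by
        have := dLegal_step_card (hatG G k) hv hBmem
        omega
      have hIH := (ih B hmeas).1
      have hdec : cnt k B u + 1 = cnt k A u := cnt_move_inr_self_mem G hBmem hj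
      have hb1 : ∀ a, a ≠ u → cnt k B a = cnt k A a :=
        fun a hau => cnt_move_inr_ne G hBmem hau
      have hupdM : mS k B + (if 1 ≤ cnt k A u then 1 else 0)
          = mS k A + (if 1 ≤ cnt k B u then 1 else 0) :=
        sum_update (fun c => if 1 ≤ c then 1 else 0) A B u hb1
      have hupdS : Sg k B + wgt k (cnt k A u) = Sg k A + wgt k (cnt k B u) :=
        sum_update (wgt k) A B u hb1
      have hQ : 0 < 2 ^ (k - 1) := Q_pos
      have eA : (if 1 ≤ cnt k A u then 1 else 0) = 1 := by rw [if_pos hu1]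
      rcases Nat.lt_or_ge (cnt k A u) 2 with hc1 | hc2
      · -- the maximum count is 1 : all stars are thin
        have hcu : cnt k A u = 1 := by omega
        have eB : (if 1 ≤ cnt k B u then 1 else 0) = 0 := by
          rw [if_neg (by omega)]
        have wA : wgt k (cnt k A u) = 2 ^ (k - 1) := by rw [hcu, wgt_one]
        have wB : wgt k (cnt k B u) = 0 := by
          have : cnt k B u = 0 := by omega
          rw [this, wgt_zero]
        -- Sg A = mS A * Q
        have hSgm : Sg k A = mS k A * 2 ^ (k - 1) := by
          unfold Sg mS
          rw [Finset.sum_mul]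
          apply Finset.sum_congr rfl
          intro x _
          have hx1 : cnt k A x ≤ 1 := hcu ▸ hmax x (Finset.mem_univ x)
          have h01 : cnt k A x = 0 ∨ cnt k A x = 1 := by omega
          rcases h01 with h01 | h01 <;> simp [h01, wgt_zero, wgt_one]
        have hmt : mS k A ≤ t := by
          have : mS k A < t + 1 := by
            apply lt_of_mul_lt_mul_right _ (Nat.zero_le (2 ^ (k - 1)))
            omega
          omega
        rcases Nat.lt_or_ge (mS k A) 2 with hm1 | hm2
        · -- only one open star
          have : mS k A = 1 := by omega
          omega
        · -- at least 2 open stars, use the invariant at t - 1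
          have hIHt := hIH (t - 1) (by omega) (by
            -- Sg B ≤ (t-1) * Q
            have h1 : Sg k B = (mS k A - 1) * 2 ^ (k - 1) := by
              have : Sg k B + 2 ^ (k - 1) = mS k A * 2 ^ (k - 1) := by omega
              have h2 : mS k A * 2 ^ (k - 1) = (mS k A - 1) * 2 ^ (k - 1) + 2 ^ (k - 1) := by
                have hone : mS k A = (mS k A - 1) + 1 := by omega
                calc mS k A * 2 ^ (k - 1) = ((mS k A - 1) + 1) * 2 ^ (k - 1) := by rw [← hone]
                  _ = (mS k A - 1) * 2 ^ (k - 1) + 2 ^ (k - 1) := by ring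
              omega
            rw [h1]
            exact Nat.mul_le_mul_right _ (by omega))
          omega
      · -- eat at a fat star
        have hck : cnt k A u ≤ k := cnt_le A u
        have hwB : wgt k (cnt k B u) = 2 * wgt k (cnt k A u) := by
          have hc : cnt k B u = cnt k A u - 1 := by omega
          rw [hc]
          exact wgt_pred hc2 hck
        have eB : (if 1 ≤ cnt k B u then 1 else 0) = 1 := by rw [if_pos (by omega)]
        have hw1 : 1 ≤ wgt k (cnt k A u) := wgt_pos (by omega)
        -- divisibility argument : Sg A + wgt (cnt A u) ≤ (t+1) * Q
        have hd1 : wgt k (cnt k A u) ∣ Sg k A :=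
          Sg_dvd (fun a => hmax a (Finset.mem_univ a)) (by omega)
        have hd2 : wgt k (cnt k A u) ∣ (t + 1) * 2 ^ (k - 1) := by
          apply Dvd.dvd.mul_left
          have := wgt_dvd (k := k) (c := 1) (cm := cnt k A u) (by omega) (by omega)
          rwa [wgt_one] at this
        have hd3 : wgt k (cnt k A u) ∣ (t + 1) * 2 ^ (k - 1) - Sg k A :=
          Nat.dvd_sub hd2 hd1
        have hle : wgt k (cnt k A u) ≤ (t + 1) * 2 ^ (k - 1) - Sg k A :=
          Nat.le_of_dvd (by omega) hd3
        have hSgB : Sg k B ≤ (t + 1) * 2 ^ (k - 1) := by omega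
        have hIHt := hIH (t + 1) (by omega) hSgB
        omega

end DLower

section GammaFinal
variable {V : Type*} [Fintype V] {G : SimpleGraph V} {k : ℕ}

lemma cnt_empty (hk : 1 ≤ k) (a : V ⊕ Unit) :
    cnt k (∅ : Finset ((V ⊕ Unit) ⊕ (V ⊕ Unit) × Fin k)) a = k := by
  unfold cnt
  simp

lemma mS_empty (hk : 1 ≤ k) :
    mS k (∅ : Finset ((V ⊕ Unit) ⊕ (V ⊕ Unit) × Fin k)) = Fintype.card V + 1 := by
  unfold mS
  have h : ∀ a : V ⊕ Unit, (if 1 ≤ cnt k (∅ : Finset ((V ⊕ Unit) ⊕ (V ⊕ Unit) × Fin k)) a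
      then 1 else 0) = 1 := by
    intro a
    rw [if_pos (by rw [cnt_empty hk]; omega)]
  rw [Finset.sum_congr rfl (fun a _ => h a)]
  simp [Fintype.card_sum]

lemma Sg_empty (hk : 1 ≤ k) :
    Sg k (∅ : Finset ((V ⊕ Unit) ⊕ (V ⊕ Unit) × Fin k)) = Fintype.card V + 1 := by
  unfold Sg
  have h : ∀ a : V ⊕ Unit, wgt k (cnt k (∅ : Finset ((V ⊕ Unit) ⊕ (V ⊕ Unit) × Fin k)) a)
      = 1 := by
    intro a
    rw [cnt_empty hk]
    simp only [wgt, if_neg (by omega : ¬ k = 0), Nat.sub_self, pow_zero]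
  rw [Finset.sum_congr rfl (fun a _ => h a)]
  simp [Fintype.card_sum]

lemma muS_empty :
    muS G k (∅ : Finset ((V ⊕ Unit) ⊕ (V ⊕ Unit) × Fin k)) = Fintype.card V + 1 := by
  unfold muS
  have h : ∀ a : V ⊕ Unit, (if closedNF (hatG G k) (Sum.inl a)
      ⊆ (∅ : Finset ((V ⊕ Unit) ⊕ (V ⊕ Unit) × Fin k)) then 0 else 1) = 1 := by
    intro a
    rw [if_neg]
    intro hsub
    exact Finset.notMem_empty _ (hsub (self_mem_closedNF _ _))
  rw [Finset.sum_congr rfl (fun a _ => h a)]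
  simp [Fintype.card_sum]

/-- the support vertices form a dominating set -/
lemma supports_dominate (G : SimpleGraph V) (k : ℕ) :
    ∀ x : (V ⊕ Unit) ⊕ (V ⊕ Unit) × Fin k,
      ∃ u ∈ Finset.univ.image (Sum.inl : V ⊕ Unit → (V ⊕ Unit) ⊕ (V ⊕ Unit) × Fin k),
        x ∈ closedNF (hatG G k) u := by
  intro x
  obtain ⟨a, ha⟩ := mem_closed_support x
  exact ⟨Sum.inl a, Finset.mem_image_of_mem _ (Finset.mem_univ a), ha⟩

lemma gammaNum_hatG (G : SimpleGraph V) (hk : 1 ≤ k) :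
    gammaNum (hatG G k) = Fintype.card V + 1 := by
  unfold gammaNum
  apply le_antisymm
  · apply Nat.sInf_le
    refine ⟨Finset.univ.image (Sum.inl : V ⊕ Unit → (V ⊕ Unit) ⊕ (V ⊕ Unit) × Fin k), ?_, ?_⟩
    · rw [Finset.card_image_of_injective _ Sum.inl_injective]
      simp [Fintype.card_sum]
    · exact supports_dominate G k
  · apply le_csInf
    · exact ⟨Fintype.card V + 1,
        Finset.univ.image (Sum.inl : V ⊕ Unit → (V ⊕ Unit) ⊕ (V ⊕ Unit) × Fin k),
        by rw [Finset.card_image_of_injective _ Sum.inl_injective]; simp [Fintype.card_sum],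
        supports_dominate G k⟩
    rintro m ⟨S, hScard, hSdom⟩
    -- for each support a choose a dominator of its first pendant
    set j0 : Fin k := ⟨0, by omega⟩ with hj0
    have hchoice : ∀ a : V ⊕ Unit, ∃ u ∈ S,
        u = (Sum.inl a : (V ⊕ Unit) ⊕ (V ⊕ Unit) × Fin k) ∨ u = Sum.inr (a, j0) := by
      intro a
      obtain ⟨u, huS, hu⟩ := hSdom (Sum.inr (a, j0))
      refine ⟨u, huS, ?_⟩
      rw [mem_closedNF'] at hu
      rcases hu with hu | hu
      · exact Or.inr hu.symm
      · rcases u with b | q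
        · obtain rfl : a = b := (hatG_adj_inl_inr G k b a j0).1 hu
          exact Or.inl rfl
        · exact absurd hu (hatG_not_adj_inr G k _ _)
    choose f hfS hf using hchoice
    have hinj : Set.InjOn f (Finset.univ : Finset (V ⊕ Unit)) := by
      intro a _ b _ hab
      rcases hf a with ha | ha <;> rcases hf b with hb | hb <;>
        rw [ha, hb] at hab <;> simp_all
    have hcard := Finset.card_le_card_of_injOn f (fun a _ => hfS a) hinj
    rw [hScard] at hcard
    simpa [Fintype.card_sum] using hcard

end GammaFinal

/-- If `G` is a connected graph with `n(G) ≥ 3` and `Ĝ` is obtained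
from `G` by adding a universal vertex `w` and `⌈log₂(n(G)+1)⌉ + 1` pendant vertices at
each vertex of `V(G) ∪ {w}`, then `γ_Zg(Ĝ) = γ(Ĝ) = (γ_g(Ĝ) + 1)/2 = n(G) + 1`. -/
theorem hatG_gamma_eqs {V : Type*} [Fintype V] (G : SimpleGraph V)
    (hconn : G.Connected) (hcard : 3 ≤ Fintype.card V) :
    gammaZg (hatG G (Nat.clog 2 (Fintype.card V + 1) + 1)) = Fintype.card V + 1 ∧
    gammaNum (hatG G (Nat.clog 2 (Fintype.card V + 1) + 1)) = Fintype.card V + 1 ∧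
    gammaGg (hatG G (Nat.clog 2 (Fintype.card V + 1) + 1)) + 1 = 2 * (Fintype.card V + 1) := by
  set k := Nat.clog 2 (Fintype.card V + 1) + 1 with hkdef
  have hclog : 0 < Nat.clog 2 (Fintype.card V + 1) :=
    Nat.clog_pos (by norm_num) (by omega)
  have hk1 : 1 ≤ k := by omega
  have hk2 : 2 ≤ k := by omega
  have hV : Nonempty V := by
    rw [← Fintype.card_pos_iff]
    omega
  obtain ⟨v0⟩ := hV
  -- Z-game lower bound
  have hZlow : Fintype.card V + 1 ≤ zVal (hatG G k) true ∅ := by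
    have h := mS_le_zVal (G := G) (k := k)
      (Fintype.card ((V ⊕ Unit) ⊕ (V ⊕ Unit) × Fin k)) ∅ true (Nat.sub_le _ _)
    rwa [mS_empty hk1] at h
  -- Z-game upper bound : Dominator starts with the universal vertex
  have hWleg : (Sum.inl (Sum.inr ()) : (V ⊕ Unit) ⊕ (V ⊕ Unit) × Fin k)
      ∈ zLegal (hatG G k) ∅ := by
    simp only [zLegal, Finset.mem_filter, Finset.mem_univ, true_and]
    intro hsub
    have hmem : (Sum.inl (Sum.inl v0) : (V ⊕ Unit) ⊕ (V ⊕ Unit) × Fin k)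
        ∈ openNF (hatG G k) (Sum.inl (Sum.inr ())) :=
      (mem_openNF' _ _ _).2 (hatG_adj_w_inl G k v0)
    exact Finset.notMem_empty _ (hsub hmem)
  have hZup : zVal (hatG G k) true ∅ ≤ 1 + Fintype.card V := by
    have h1 := zVal_true_le_single (hatG G k) hWleg
      (B := closedNF (hatG G k) (Sum.inl (Sum.inr ()))) (fun x => by simp)
    have h2 := zVal_le_qS (G := G) (k := k)
      (Fintype.card ((V ⊕ Unit) ⊕ (V ⊕ Unit) × Fin k))
      (closedNF (hatG G k) (Sum.inl (Sum.inr ()))) false (Nat.sub_le _ _)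
      (fun x hx => hx)
    have h3 := qS_le_card (G := G) (k := k)
      (closedNF (hatG G k) (Sum.inl (Sum.inr ())))
    omega
  -- domination game lower bound
  have hSg0 : Sg k (∅ : Finset ((V ⊕ Unit) ⊕ (V ⊕ Unit) × Fin k)) ≤ 1 * 2 ^ (k - 1) := by
    rw [Sg_empty hk1, one_mul]
    have h := Nat.le_pow_clog (b := 2) (by norm_num) (Fintype.card V + 1)
    have hke : k - 1 = Nat.clog 2 (Fintype.card V + 1) := by omega
    rw [hke]
    exact h
  have hDlow := (dVal_lower (G := G) hk2
    (Fintype.card ((V ⊕ Unit) ⊕ (V ⊕ Unit) × Fin k)) ∅ (Nat.sub_le _ _)).1 1 le_rfl hSg0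
  rw [mS_empty hk1] at hDlow
  -- domination game upper bound
  have hDup := (dVal_le_muS (G := G) (k := k)
    (Fintype.card ((V ⊕ Unit) ⊕ (V ⊕ Unit) × Fin k)) ∅ (Nat.sub_le _ _)).1
  rw [muS_empty] at hDup
  refine ⟨?_, gammaNum_hatG G hk1, ?_⟩
  · unfold gammaZg
    omega
  · unfold gammaGg
    omega

end ZGamePaper
end
end

section
/- If G is a finite graph in which every vertex u has a true twin v distinct from u (i.e., N[u] = N[v] and u ≠ v), then G is Z-insensitive. -/
open Finset

open scoped Classical

noncomputable section

namespace ZGamePaper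

variable {V : Type*} {W : Type*}

/-- If every vertex of a finite graph `G` has a true twin distinct
from itself, then `G` is Z-insensitive. -/
theorem zInsensitive_of_trueTwins {V : Type*} [Fintype V] (G : SimpleGraph V)
    (h : ∀ u : V, ∃ v : V, v ≠ u ∧ closedNF G v = closedNF G u) :
    ZInsensitive G := by
  have mem_cl : ∀ (x y : V), x ∈ closedNF G y ↔ x = y ∨ G.Adj y x := by
    intro x y; simp [closedNF]
  constructor
  · intro v
    obtain ⟨u, hu, he⟩ := h v
    have hv : v ∈ closedNF G u := by rw [he, mem_cl]; left; rfl
    rw [mem_cl] at hv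
    rcases hv with h1 | h1
    · exact absurd h1.symm hu
    · exact ⟨u, h1.symm⟩
  · rintro D ⟨v, hvA, hNv, -⟩
    obtain ⟨v', hv'ne, he⟩ := h v
    have hadj : G.Adj v v' := by
      have hv : v ∈ closedNF G v' := by rw [he, mem_cl]; left; rfl
      rw [mem_cl] at hv
      rcases hv with h1 | h1
      · exact absurd h1.symm hv'ne
      · exact h1.symm
    have hv' : v' ∈ D.biUnion (closedNF G) := hNv (by simp [openNF, hadj])
    obtain ⟨d, hd, hvd⟩ := Finset.mem_biUnion.mp hv'
    rw [mem_cl] at hvd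
    have hdv' : d ∈ closedNF G v' := by
      rw [mem_cl]
      rcases hvd with h1 | h1
      · left; exact h1.symm
      · right; exact h1.symm
    rw [he, mem_cl] at hdv'
    apply hvA
    refine Finset.mem_biUnion.mpr ⟨d, hd, ?_⟩
    rw [mem_cl]
    rcases hdv' with h1 | h1
    · left; exact h1.symm
    · right; exact h1.symm

end ZGamePaper
end
end
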